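/- Hypergeometric tail bound: let 1 ≤ k ≤ P be integers with k < P, and let J be a nonnegative integer with J ≤ k. Then C(k, J) · C(P − k, k − J) / C(P, k) ≤ (k² / (P − k))^J, where C(·,·) denotes binomial coefficients. -/
import Mathlib

/-- Key natural-number inequality: `C(P−J, k−J) (P−k)^J ≤ C(P,k) k^J`. -/
lemma aux14 (P k : ℕ) (hkP : k ≤ P) :
    ∀ J, J ≤ k → (P - J).choose (k - J) * (P - k) ^ J ≤ P.choose k * k ^ J := by
  intro J
  induction J with
  | zero => simp
  | succ J ih =>
    intro hJ
    have hJk : J < k := Nat.lt_of_succ_le hJ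
    have hJP : J < P := lt_of_lt_of_le hJk hkP
    -- identity: (P-J) * C(P-J-1, k-J-1) = C(P-J, k-J) * (k-J)
    have hid : (P - J) * (P - (J + 1)).choose (k - (J + 1)) =
        (P - J).choose (k - J) * (k - J) := by
      have h1 : P - J = (P - (J + 1)) + 1 := by omega
      have h2 : k - J = (k - (J + 1)) + 1 := by omega
      rw [h1, h2]
      exact Nat.add_one_mul_choose_eq _ _
    calc (P - (J + 1)).choose (k - (J + 1)) * (P - k) ^ (J + 1)
        = ((P - (J + 1)).choose (k - (J + 1)) * (P - k)) * (P - k) ^ J := by ring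
      _ ≤ ((P - (J + 1)).choose (k - (J + 1)) * (P - J)) * (P - k) ^ J :=
          mul_le_mul_left (mul_le_mul_right (by omega) _) _
      _ = ((P - J).choose (k - J) * (k - J)) * (P - k) ^ J := by
          rw [mul_comm ((P - (J + 1)).choose (k - (J + 1))) (P - J), hid]
      _ ≤ ((P - J).choose (k - J) * k) * (P - k) ^ J :=
          mul_le_mul_left (mul_le_mul_right (by omega) _) _
      _ = ((P - J).choose (k - J) * (P - k) ^ J) * k := by ring
      _ ≤ (P.choose k * k ^ J) * k := mul_le_mul_left (ih hJk.le) _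
      _ = P.choose k * k ^ (J + 1) := by ring

lemma aux14' (P k J : ℕ) (hkP : k ≤ P) (hJ : J ≤ k) :
    k.choose J * ((P - k).choose (k - J)) * (P - k) ^ J ≤ P.choose k * (k ^ 2) ^ J := by
  have h1 : (P - k).choose (k - J) ≤ (P - J).choose (k - J) :=
    Nat.choose_le_choose _ (by omega)
  have h2 : k.choose J ≤ k ^ J := Nat.choose_le_pow _ _
  calc k.choose J * ((P - k).choose (k - J)) * (P - k) ^ J
      ≤ k ^ J * ((P - J).choose (k - J)) * (P - k) ^ J := by gcongr
    _ = k ^ J * ((P - J).choose (k - J) * (P - k) ^ J) := by ring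
    _ ≤ k ^ J * (P.choose k * k ^ J) := mul_le_mul_right (aux14 P k hkP J hJ) _
    _ = P.choose k * (k ^ 2) ^ J := by ring

/-- Hypergeometric tail bound: for integers `1 ≤ k < P` with `2k ≤ P` and `0 ≤ J ≤ k`,
`C(k,J) C(P−k, k−J) / C(P,k) ≤ (k²/(P−k))^J`. -/
theorem stmt14 (P k J : ℕ) (hk : 1 ≤ k) (hkP : k < P) (h2k : 2 * k ≤ P) (hJ : J ≤ k) :
    ((k.choose J : ℝ) * ((P - k).choose (k - J) : ℝ)) / (P.choose k : ℝ)
      ≤ ((k : ℝ) ^ 2 / ((P : ℝ) - (k : ℝ))) ^ J := by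
  have hPk : (0 : ℝ) < (P : ℝ) - (k : ℝ) := by
    have : (k : ℝ) < P := by exact_mod_cast hkP
    linarith
  have hC : (0 : ℝ) < (P.choose k : ℝ) := by
    exact_mod_cast Nat.choose_pos hkP.le
  rw [div_pow, div_le_div_iff₀ hC (by positivity)]
  have key := aux14' P k J hkP.le hJ
  have hcast : ((P : ℝ) - (k : ℝ)) = ((P - k : ℕ) : ℝ) := by
    rw [Nat.cast_sub hkP.le]
  rw [hcast]
  calc (k.choose J : ℝ) * ((P - k).choose (k - J) : ℝ) * ((P - k : ℕ) : ℝ) ^ J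
      = ((k.choose J * ((P - k).choose (k - J)) * (P - k) ^ J : ℕ) : ℝ) := by push_cast; ring
    _ ≤ ((P.choose k * (k ^ 2) ^ J : ℕ) : ℝ) := by exact_mod_cast key
    _ = ((k : ℝ) ^ 2) ^ J * (P.choose k : ℝ) := by push_cast; ring
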